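/- arXiv:1204.6006 — 2 statements merged into one kernel-verified Lean document; each statement's English description precedes it below -/
import Mathlib

section
/- Let ψ be a homeomorphism of ℝ² with M := ‖ψ‖_* < ∞, let x₀ ∈ ℝ² and r > 0. Then ψ(B(x₀,r)) ⊂ B(ψ(x₀), g_ψ(r)/4); consequently, for every ball B' = B(c,ρ) contained in ψ(B(x₀,r)), the dilated ball 4B' = B(c,4ρ) is contained in B(ψ(x₀), g_ψ(r)). -/
open MeasureTheory Metric Real
open scoped ENNReal

noncomputable section

abbrev E2 := EuclideanSpace ℝ (Fin 2)

/-- The comparison function `Φ`. -/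
def Phi (r s : ℝ) : ℝ :=
  if 0 ≤ (1 - s) * (1 - r) then
    max ((1 + |Real.log s|) / (1 + |Real.log r|)) ((1 + |Real.log r|) / (1 + |Real.log s|))
  else (1 + |Real.log s|) * (1 + |Real.log r|)

/-- `‖ψ‖_* = sup_{x ≠ y} Φ(|ψ(x)-ψ(y)|, |x-y|)`, a supremum taken in `[0,∞]`. -/
def starNorm (ψ : E2 → E2) : ℝ≥0∞ :=
  ⨆ (x : E2) (y : E2) (_ : x ≠ y), ENNReal.ofReal (Phi (dist (ψ x) (ψ y)) (dist x y))

/-- `g_ψ(r)` with `M = ‖ψ‖_*`: `4e^M r^M` if `r ≥ 1`, `4 max{e r^{1/M}, e^M r}` if `0 < r < 1`. -/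
def gFun (M r : ℝ) : ℝ :=
  if 1 ≤ r then 4 * Real.exp M * r ^ M
  else 4 * max (Real.exp 1 * r ^ (1 / M)) (Real.exp M * r)

lemma one_le_phi (d s : ℝ) : 1 ≤ Phi d s := by
  have h1 : (0:ℝ) < 1 + |Real.log d| := by positivity
  have h2 : (0:ℝ) < 1 + |Real.log s| := by positivity
  unfold Phi
  split_ifs with h
  · rcases le_total (1 + |Real.log d|) (1 + |Real.log s|) with hle | hle
    · exact le_trans ((one_le_div h1).mpr hle) (le_max_left _ _)
    · exact le_trans ((one_le_div h2).mpr hle) (le_max_right _ _)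
  · nlinarith [abs_nonneg (Real.log d), abs_nonneg (Real.log s)]

lemma gFun_div4 (M r : ℝ) : gFun M r / 4 =
    if 1 ≤ r then Real.exp M * r ^ M
    else max (Real.exp 1 * r ^ (1 / M)) (Real.exp M * r) := by
  unfold gFun; split_ifs <;> ring

lemma key_est (M d s r : ℝ) (hM : 1 ≤ M) (hd : 0 < d) (hs : 0 < s) (hsr : s < r)
    (h : Phi d s ≤ M) : d < gFun M r / 4 := by
  have hMpos : (0:ℝ) < M := lt_of_lt_of_le one_pos hM
  have hr : 0 < r := lt_trans hs hsr
  have hlogsr : Real.log s < Real.log r := Real.log_lt_log hs hsr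
  rw [gFun_div4]
  split_ifs with hr1
  · -- r ≥ 1 : show d < exp M * r ^ M
    have hlr : 0 ≤ Real.log r := Real.log_nonneg hr1
    have hrM : r ^ M = Real.exp (Real.log r * M) := Real.rpow_def_of_pos hr M
    rw [hrM, ← Real.exp_add]
    rw [show d = Real.exp (Real.log d) from (Real.exp_log hd).symm, Real.exp_lt_exp]
    have hld : Real.log d ≤ |Real.log d| := le_abs_self _
    unfold Phi at h
    split_ifs at h with h0
    · have h2 : (1 + |Real.log d|) / (1 + |Real.log s|) ≤ M := (max_le_iff.mp h).2
      have hspos : (0:ℝ) < 1 + |Real.log s| := by positivity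
      have h3 : 1 + |Real.log d| ≤ M * (1 + |Real.log s|) := (div_le_iff₀ hspos).mp h2
      rcases le_or_gt 1 s with hs1 | hs1
      · have : |Real.log s| = Real.log s := abs_of_nonneg (Real.log_nonneg hs1)
        rw [this] at h3
        nlinarith
      · -- s < 1, same sign forces d ≤ 1
        have hd1 : d ≤ 1 := by nlinarith
        have : Real.log d ≤ 0 := Real.log_nonpos hd.le hd1
        nlinarith
    · have hspos : (1:ℝ) ≤ 1 + |Real.log s| := le_add_of_nonneg_right (abs_nonneg _)
      have hdpos : (0:ℝ) ≤ 1 + |Real.log d| := by positivity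
      nlinarith
  · -- r < 1
    push_neg at hr1
    have hs1 : s < 1 := lt_trans hsr hr1
    have hlr : Real.log r < 0 := Real.log_neg hr hr1
    have hls : Real.log s < 0 := Real.log_neg hs hs1
    unfold Phi at h
    split_ifs at h with h0
    · -- same sign: d ≤ 1, show d < exp 1 * r^(1/M)
      have hd1 : d ≤ 1 := by nlinarith
      have hldn : Real.log d ≤ 0 := Real.log_nonpos hd.le hd1
      have hadn : |Real.log d| = -Real.log d := abs_of_nonpos hldn
      have hasn : |Real.log s| = -Real.log s := abs_of_neg hls
      have h2 : (1 + |Real.log s|) / (1 + |Real.log d|) ≤ M := (max_le_iff.mp h).1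
      have hdpos : (0:ℝ) < 1 + |Real.log d| := by positivity
      have h3 : 1 + |Real.log s| ≤ M * (1 + |Real.log d|) := (div_le_iff₀ hdpos).mp h2
      rw [hadn] at h3
      rw [hasn] at h3
      refine lt_of_lt_of_le ?_ (le_max_left _ _)
      have hrM : r ^ (1/M) = Real.exp (Real.log r * (1/M)) := Real.rpow_def_of_pos hr _
      rw [hrM, ← Real.exp_add,
        show d = Real.exp (Real.log d) from (Real.exp_log hd).symm, Real.exp_lt_exp]
      have h9 : M * Real.log d < M * (1 + Real.log r * (1/M)) := by
        have heq : M * (1 + Real.log r * (1/M)) = M + Real.log r := by field_simp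
        rw [heq]; nlinarith
      exact lt_of_mul_lt_mul_left h9 hMpos.le
    · -- opposite sign: d > 1, show d < exp M * r
      have hd1 : 1 < d := by nlinarith [not_le.mp h0]
      refine lt_of_lt_of_le ?_ (le_max_right _ _)
      have hldp : 0 < Real.log d := Real.log_pos hd1
      have hads : |Real.log d| = Real.log d := abs_of_pos hldp
      have hass : |Real.log s| = -Real.log s := abs_of_neg hls
      rw [hads, hass] at h
      rw [show Real.exp M * r = Real.exp (M + Real.log r) by
        rw [Real.exp_add, Real.exp_log hr]]
      rw [show d = Real.exp (Real.log d) from (Real.exp_log hd).symm, Real.exp_lt_exp]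
      nlinarith [mul_pos (neg_pos.mpr hls) hldp]


lemma dist_add_le_of_ball_subset {c z : E2} {ρ R : ℝ} (hρ : 0 < ρ)
    (h : ball c ρ ⊆ ball z R) : dist c z + ρ ≤ R := by
  have key : ∀ t : ℝ, 0 ≤ t → t < ρ → dist c z + t < R := by
    intro t ht htρ
    rcases eq_or_ne c z with rfl | hcz
    · have hu : ‖(EuclideanSpace.single (0 : Fin 2) (1:ℝ) : E2)‖ = 1 := by
        rw [EuclideanSpace.norm_single]; norm_num
      have hy : c + t • (EuclideanSpace.single (0 : Fin 2) (1:ℝ) : E2) ∈ ball c ρ := by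
        rw [mem_ball, dist_eq_norm, add_sub_cancel_left, norm_smul, hu, mul_one,
          Real.norm_eq_abs, abs_of_nonneg ht]
        exact htρ
      have h2 := h hy
      rw [mem_ball, dist_eq_norm, add_sub_cancel_left, norm_smul, hu, mul_one,
        Real.norm_eq_abs, abs_of_nonneg ht] at h2
      simpa using h2
    · set n : ℝ := ‖c - z‖ with hn
      have hnpos : 0 < n := by
        rw [hn, norm_pos_iff]
        exact sub_ne_zero_of_ne hcz
      set y : E2 := c + (t / n) • (c - z) with hy
      have hyc : dist y c = t := by
        rw [hy, dist_eq_norm, add_sub_cancel_left, norm_smul, Real.norm_eq_abs,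
          abs_of_nonneg (div_nonneg ht hnpos.le), ← hn]
        field_simp
      have hymem : y ∈ ball c ρ := by rw [mem_ball, hyc]; exact htρ
      have h2 := h hymem
      have hyz : dist y z = n + t := by
        have : y - z = (1 + t / n) • (c - z) := by
          rw [hy]; module
        rw [dist_eq_norm, this, norm_smul, Real.norm_eq_abs, ← hn,
          abs_of_nonneg (by positivity : (0:ℝ) ≤ 1 + t / n)]
        field_simp
      rw [mem_ball, hyz] at h2
      rw [dist_eq_norm, ← hn]
      linarith
  by_contra hcon
  push_neg at hcon
  have hcz : dist c z < R := by
    have := h (mem_ball_self hρ)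
    rwa [mem_ball] at this
  have h1 : (0:ℝ) ≤ R - dist c z := by linarith
  have h2 : R - dist c z < ρ := by linarith
  have := key _ h1 h2
  linarith

lemma one_le_starNorm (ψ : E2 → E2) : 1 ≤ starNorm ψ := by
  obtain ⟨x, y, hxy⟩ := exists_pair_ne E2
  calc (1:ℝ≥0∞) ≤ ENNReal.ofReal (Phi (dist (ψ x) (ψ y)) (dist x y)) := by
        rw [ENNReal.one_le_ofReal]; exact one_le_phi _ _
    _ ≤ starNorm ψ :=
        le_iSup_of_le x (le_iSup_of_le y (le_iSup_of_le hxy le_rfl))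

lemma phi_le_starNorm (ψ : E2 → E2) (hfin : starNorm ψ ≠ ⊤) {x y : E2} (hxy : x ≠ y) :
    Phi (dist (ψ x) (ψ y)) (dist x y) ≤ (starNorm ψ).toReal := by
  have h1 : ENNReal.ofReal (Phi (dist (ψ x) (ψ y)) (dist x y)) ≤ starNorm ψ :=
    le_iSup_of_le x (le_iSup_of_le y (le_iSup_of_le hxy le_rfl))
  have h2 := ENNReal.toReal_mono hfin h1
  rwa [ENNReal.toReal_ofReal (le_trans zero_le_one (one_le_phi _ _))] at h2

/-- `ψ(B(x₀,r)) ⊆ B(ψ(x₀), g_ψ(r)/4)`, hence every ball `B' ⊆ ψ(B(x₀,r))`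
satisfies `4B' ⊆ B(ψ(x₀), g_ψ(r))`. -/
theorem image_ball_subset (ψ : E2 ≃ₜ E2) (hfin : starNorm ψ ≠ ⊤)
    (x₀ : E2) (r : ℝ) (hr : 0 < r) :
    (⇑ψ '' ball x₀ r ⊆ ball (ψ x₀) (gFun (starNorm ψ).toReal r / 4)) ∧
    ∀ (c : E2) (ρ : ℝ), ball c ρ ⊆ ⇑ψ '' ball x₀ r →
      ball c (4 * ρ) ⊆ ball (ψ x₀) (gFun (starNorm ψ).toReal r) := by
  set M := (starNorm ψ).toReal with hMdef
  have hM : 1 ≤ M := by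
    have := ENNReal.toReal_mono hfin (one_le_starNorm ψ)
    simpa using this
  have hgpos : 0 < gFun M r / 4 := by
    rw [gFun_div4]
    split_ifs with h1
    · positivity
    · exact lt_of_lt_of_le (by positivity : (0:ℝ) < Real.exp M * r) (le_max_right _ _)
  have part1 : ⇑ψ '' ball x₀ r ⊆ ball (ψ x₀) (gFun M r / 4) := by
    rintro _ ⟨x, hx, rfl⟩
    rw [mem_ball]
    rcases eq_or_ne x x₀ with rfl | hne
    · simpa using hgpos
    · have hd : 0 < dist (ψ x) (ψ x₀) := by
        rw [dist_pos]
        exact fun h => hne (ψ.injective h)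
      exact key_est M _ _ r hM hd (dist_pos.mpr hne) (mem_ball.mp hx)
        (phi_le_starNorm ψ hfin hne)
  refine ⟨part1, fun c ρ hsub => ?_⟩
  rcases le_or_gt ρ 0 with hρ | hρ
  · rw [ball_eq_empty.mpr (by linarith : 4 * ρ ≤ 0)]
    exact Set.empty_subset _
  · have hsub' : ball c ρ ⊆ ball (ψ x₀) (gFun M r / 4) := hsub.trans part1
    have hkey : dist c (ψ x₀) + ρ ≤ gFun M r / 4 := by
      exact dist_add_le_of_ball_subset hρ hsub'
    intro y hy
    rw [mem_ball] at hy ⊢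
    have := dist_triangle y c (ψ x₀)
    have hdc : 0 ≤ dist c (ψ x₀) := dist_nonneg
    linarith
end
end

section
/- Let ψ be a homeomorphism of ℝ² with M := ‖ψ‖_* < ∞, let B = B(x₀,r) be a ball with 0 < r ≤ 1/2, and let 0 < ε ≤ 1. Then every x ∈ B with dist(ψ(x), ψ(ℝ² \ B)) ≤ ε satisfies dist(x, ∂B) ≤ e ε^{1/M}; consequently the Lebesgue measure of the set {x ∈ B : dist(ψ(x), ψ(ℝ² \ B)) ≤ ε} is at most 2πe ε^{1/M} r. -/
open MeasureTheory Metric Real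
open scoped ENNReal

noncomputable section

lemma one_le_Phi (r s : ℝ) : 1 ≤ Phi r s := by
  have h1 : (0:ℝ) < 1 + |Real.log r| := by positivity
  have h2 : (0:ℝ) < 1 + |Real.log s| := by positivity
  unfold Phi
  split_ifs
  · rcases le_total (1 + |Real.log s|) (1 + |Real.log r|) with h | h
    · exact le_max_of_le_right ((one_le_div h2).2 h)
    · exact le_max_of_le_left ((one_le_div h1).2 h)
  · nlinarith [abs_nonneg (Real.log r), abs_nonneg (Real.log s)]

lemma Phi_le_starNorm (ψ : E2 ≃ₜ E2) (hfin : starNorm ψ ≠ ⊤) {x y : E2} (hxy : x ≠ y) :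
    Phi (dist (ψ x) (ψ y)) (dist x y) ≤ (starNorm ψ).toReal := by
  have h : ENNReal.ofReal (Phi (dist (ψ x) (ψ y)) (dist x y)) ≤ starNorm ψ :=
    le_iSup_of_le x (le_iSup_of_le y (le_iSup_of_le hxy le_rfl))
  have h0 : (0:ℝ) ≤ Phi (dist (ψ x) (ψ y)) (dist x y) :=
    le_trans zero_le_one (one_le_Phi _ _)
  calc Phi (dist (ψ x) (ψ y)) (dist x y)
      = (ENNReal.ofReal (Phi (dist (ψ x) (ψ y)) (dist x y))).toReal :=
        (ENNReal.toReal_ofReal h0).symm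
    _ ≤ (starNorm ψ).toReal := ENNReal.toReal_mono hfin h

lemma one_le_M (ψ : E2 ≃ₜ E2) (hfin : starNorm ψ ≠ ⊤) : 1 ≤ (starNorm ψ).toReal := by
  obtain ⟨a, b, hab⟩ := exists_pair_ne E2
  exact le_trans (one_le_Phi _ _) (Phi_le_starNorm ψ hfin hab)

lemma infDist_sphere_le (x x₀ : E2) (r : ℝ) (hr : 0 < r) (hx : dist x x₀ ≤ r) :
    infDist x (sphere x₀ r) ≤ r - dist x x₀ := by
  rcases eq_or_ne x x₀ with rfl | hne
  · have he : ‖(EuclideanSpace.single (0 : Fin 2) (1:ℝ))‖ = 1 := by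
      simp [EuclideanSpace.norm_single]
    have hz : x + r • EuclideanSpace.single (0 : Fin 2) (1:ℝ) ∈ sphere x r := by
      simp only [mem_sphere, dist_self_add_left, norm_smul, he, mul_one,
        Real.norm_eq_abs, abs_of_pos hr]
    have := infDist_le_dist_of_mem (x := x) hz
    rw [dist_self_add_right, norm_smul, he, mul_one, Real.norm_eq_abs, abs_of_pos hr] at this
    simpa using this
  · set d := dist x x₀ with hd
    have hd0 : 0 < d := dist_pos.2 hne
    set z := x₀ + (r / d) • (x - x₀) with hzdef
    have hnxx : ‖x - x₀‖ = d := by rw [hd, dist_eq_norm]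
    have hz : z ∈ sphere x₀ r := by
      simp only [hzdef, mem_sphere, dist_self_add_left, norm_smul, hnxx,
        Real.norm_eq_abs, abs_of_pos (div_pos hr hd0)]
      field_simp
    have hxz : dist x z = r - d := by
      have hsub : x - z = (1 - r / d) • (x - x₀) := by
        rw [sub_smul, one_smul, hzdef]; abel
      rw [dist_eq_norm, hsub, norm_smul, hnxx, Real.norm_eq_abs]
      have h1 : 1 - r / d ≤ 0 := by
        rw [sub_nonpos, le_div_iff₀ hd0, one_mul]; exact hx
      rw [abs_of_nonpos h1]
      field_simp
      ring
    calc infDist x (sphere x₀ r) ≤ dist x z := infDist_le_dist_of_mem hz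
      _ = r - d := hxz

lemma sub_le_infDist_sphere (x x₀ : E2) (r : ℝ) (hr : 0 < r) :
    r - dist x x₀ ≤ infDist x (sphere x₀ r) := by
  have hne : (sphere x₀ r).Nonempty := NormedSpace.sphere_nonempty.2 hr.le
  by_contra h
  push_neg at h
  obtain ⟨z, hz, hlt⟩ := (infDist_lt_iff hne).1 h
  have hzr : r = dist z x₀ := (mem_sphere.1 hz).symm
  have h2 := dist_triangle z x x₀
  rw [dist_comm z x] at h2
  linarith

set_option maxHeartbeats 1000000 in
/-- points of a ball mapped `ε`-close to the image of the complement lie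
`e ε^{1/M}`-close to the boundary circle, and the measure of the set of such points is at
most `2πe ε^{1/M} r`. -/
theorem near_boundary_measure_estimate (ψ : E2 ≃ₜ E2) (hfin : starNorm ψ ≠ ⊤)
    (x₀ : E2) (r : ℝ) (hr0 : 0 < r) (hr : r ≤ 1 / 2)
    (ε : ℝ) (hε0 : 0 < ε) (hε1 : ε ≤ 1) :
    (∀ x ∈ ball x₀ r,
        infDist (ψ x) (⇑ψ '' (ball x₀ r)ᶜ) ≤ ε →
        infDist x (sphere x₀ r) ≤ Real.exp 1 * ε ^ (1 / (starNorm ψ).toReal)) ∧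
    volume {x | x ∈ ball x₀ r ∧ infDist (ψ x) (⇑ψ '' (ball x₀ r)ᶜ) ≤ ε} ≤
      ENNReal.ofReal (2 * Real.pi * Real.exp 1 * ε ^ (1 / (starNorm ψ).toReal) * r) := by
  set M : ℝ := (starNorm ψ).toReal with hM
  have hM1 : 1 ≤ M := one_le_M ψ hfin
  have hM0 : 0 < M := lt_of_lt_of_le one_pos hM1
  set δ : ℝ := Real.exp 1 * ε ^ (1 / M) with hδ
  have hδ0 : 0 < δ := by positivity
  clear_value M δ
  -- part 1
  have part1 : ∀ x ∈ ball x₀ r,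
      infDist (ψ x) (⇑ψ '' (ball x₀ r)ᶜ) ≤ ε → infDist x (sphere x₀ r) ≤ δ := by
    intro x hx hinf
    have hxr : dist x x₀ < r := mem_ball.1 hx
    -- the image of the complement is closed and nonempty
    have hclosed : IsClosed (⇑ψ '' (ball x₀ r)ᶜ) :=
      (Homeomorph.isClosedMap ψ) _ isOpen_ball.isClosed_compl
    have hsne : (sphere x₀ r).Nonempty := NormedSpace.sphere_nonempty.2 hr0.le
    obtain ⟨z₀, hz₀⟩ := hsne
    have hz₀c : z₀ ∈ (ball x₀ r)ᶜ := by
      simp only [Set.mem_compl_iff, mem_ball, not_lt]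
      exact le_of_eq (mem_sphere.1 hz₀).symm
    have hne : (⇑ψ '' (ball x₀ r)ᶜ).Nonempty := ⟨ψ z₀, Set.mem_image_of_mem _ hz₀c⟩
    obtain ⟨w, hw, hweq⟩ := hclosed.exists_infDist_eq_dist hne (ψ x)
    obtain ⟨y, hy, rfl⟩ := hw
    have hxy : x ≠ y := fun h => hy (h ▸ hx)
    set ρ : ℝ := dist (ψ x) (ψ y) with hρ
    have hρε : ρ ≤ ε := hweq.symm.trans_le hinf
    have hρ0 : 0 < ρ := dist_pos.2 (fun h => hxy (ψ.injective h))
    set s : ℝ := dist x y with hs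
    have hyge : r ≤ dist y x₀ := by
      have := hy
      simp only [Set.mem_compl_iff, mem_ball, not_lt] at this
      exact this
    have hts : r - dist x x₀ ≤ s := by
      have h := dist_triangle y x x₀
      rw [dist_comm y x] at h
      linarith
    set d : ℝ := infDist x (sphere x₀ r) with hdd
    have hdt : d ≤ r - dist x x₀ := infDist_sphere_le x x₀ r hr0 hxr.le
    have hds : d ≤ s := le_trans hdt hts
    have hP : Phi ρ s ≤ M := by rw [hM]; exact Phi_le_starNorm ψ hfin hxy
    have hs0 : 0 < s := dist_pos.2 hxy
    clear_value ρ s d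
    have hd12 : d ≤ 1 / 2 := by
      have := dist_nonneg (x := x) (y := x₀)
      linarith
    by_contra hcon
    push_neg at hcon
    -- δ < d ≤ 1/2 < 1
    have hδ1 : δ < 1 := lt_of_lt_of_le (lt_of_lt_of_le hcon hd12) (by norm_num)
    have hlogδ : Real.log δ = 1 + (1 / M) * Real.log ε := by
      rw [hδ, Real.log_mul (Real.exp_ne_zero 1) (by positivity), Real.log_exp,
        Real.log_rpow hε0]
    have hlogδ0 : Real.log δ < 0 := Real.log_neg hδ0 hδ1
    have hlogε : Real.log ε < -M := by
      have : (1 / M) * Real.log ε < -1 := by linarith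
      have h2 := (mul_lt_mul_iff_right₀ hM0).2 this
      rw [← mul_assoc, mul_one_div_cancel hM0.ne', one_mul] at h2
      linarith
    have hε1' : ε < 1 := by
      by_contra h
      push_neg at h
      have : ε = 1 := le_antisymm hε1 h
      rw [this, Real.log_one] at hlogε; linarith
    have hρ1 : ρ < 1 := lt_of_le_of_lt hρε hε1'
    have hlogρ : Real.log ρ ≤ Real.log ε := Real.log_le_log hρ0 hρε
    have habsρ : |Real.log ρ| = -Real.log ρ :=
      abs_of_nonpos (Real.log_nonpos hρ0.le hρ1.le)
    rcases le_or_gt s 1 with hs1 | hs1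
    · -- both ≤ 1 : branch max
      have hbr : 0 ≤ (1 - s) * (1 - ρ) :=
        mul_nonneg (by linarith) (by linarith)
      have habss : |Real.log s| = -Real.log s :=
        abs_of_nonpos (Real.log_nonpos hs0.le hs1)
      have hlogs : Real.log δ < Real.log s :=
        Real.log_lt_log hδ0 (lt_of_lt_of_le hcon hds)
      have hpos : (0:ℝ) < 1 + |Real.log s| := by positivity
      have hmax : (1 + |Real.log ρ|) / (1 + |Real.log s|) ≤ M := by
        have := le_max_right ((1 + |Real.log s|) / (1 + |Real.log ρ|))
          ((1 + |Real.log ρ|) / (1 + |Real.log s|))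
        have hPhi : Phi ρ s = max ((1 + |Real.log s|) / (1 + |Real.log ρ|))
            ((1 + |Real.log ρ|) / (1 + |Real.log s|)) := by
          unfold Phi; rw [if_pos hbr]
        rw [hPhi] at hP
        exact le_trans this hP
      rw [div_le_iff₀ hpos] at hmax
      -- 1 + |log s| < -(1/M) log ε
      have h1 : 1 + |Real.log s| < -(1 / M) * Real.log ε := by
        rw [habss]; rw [hlogδ] at hlogs; linarith
      have h2 : M * (1 + |Real.log s|) < -Real.log ε := by
        have := (mul_lt_mul_iff_right₀ hM0).2 h1
        rw [← mul_assoc, mul_comm M (-(1/M)), mul_assoc] at this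
        have hMM : -(1 / M) * M = -1 := by field_simp
        nlinarith [abs_nonneg (Real.log s)]
      rw [habsρ] at hmax
      linarith
    · -- s > 1 : branch product
      have hbr : ¬ (0 ≤ (1 - s) * (1 - ρ)) :=
        not_le.2 (mul_neg_of_neg_of_pos (by linarith) (by linarith))
      have hPhi : Phi ρ s = (1 + |Real.log s|) * (1 + |Real.log ρ|) := by
        unfold Phi; rw [if_neg hbr]
      rw [hPhi] at hP
      have h1 : 1 + |Real.log ρ| ≤ (1 + |Real.log s|) * (1 + |Real.log ρ|) := by
        nlinarith [abs_nonneg (Real.log s), abs_nonneg (Real.log ρ)]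
      linarith
  refine ⟨part1, ?_⟩
  -- part 2
  have vol_ball : ∀ (c : E2) (R : ℝ), 0 ≤ R →
      volume (ball c R) = ENNReal.ofReal (π * R ^ 2) := by
    intro c R hR
    rw [EuclideanSpace.volume_ball]
    have hcard : (Fintype.card (Fin 2) : ℝ) = 2 := by simp
    simp only [Fintype.card_fin]
    norm_num [Real.Gamma_two]
    rw [← ENNReal.ofReal_pow hR, ← ENNReal.ofReal_pow (Real.sqrt_nonneg _), Real.sq_sqrt pi_nonneg,
      ← ENNReal.ofReal_mul (by positivity)]
    ring_nf
  have hsubball : {x | x ∈ ball x₀ r ∧ infDist (ψ x) (⇑ψ '' (ball x₀ r)ᶜ) ≤ ε} ⊆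
      ball x₀ r := fun x hx => hx.1
  rcases le_or_gt r δ with hrδ | hrδ
  · calc volume {x | x ∈ ball x₀ r ∧ infDist (ψ x) (⇑ψ '' (ball x₀ r)ᶜ) ≤ ε}
        ≤ volume (ball x₀ r) := measure_mono hsubball
      _ = ENNReal.ofReal (π * r ^ 2) := vol_ball x₀ r hr0.le
      _ ≤ ENNReal.ofReal (2 * π * Real.exp 1 * ε ^ (1 / M) * r) := by
          apply ENNReal.ofReal_le_ofReal
          have : 2 * π * Real.exp 1 * ε ^ (1 / M) * r = 2 * π * δ * r := by
            rw [hδ]; ring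
          rw [this]
          nlinarith [pi_pos, mul_le_mul_of_nonneg_left hrδ (by positivity : (0:ℝ) ≤ π * r),
            mul_pos (mul_pos pi_pos hδ0) hr0]
  · -- annulus case
    have hsub2 : {x | x ∈ ball x₀ r ∧ infDist (ψ x) (⇑ψ '' (ball x₀ r)ᶜ) ≤ ε} ⊆
        ball x₀ r \ ball x₀ (r - δ) := by
      intro x hx
      refine ⟨hx.1, ?_⟩
      have h1 : infDist x (sphere x₀ r) ≤ δ := part1 x hx.1 hx.2
      have h2 : r - dist x x₀ ≤ infDist x (sphere x₀ r) :=
        sub_le_infDist_sphere x x₀ r hr0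
      simp only [mem_ball, not_lt]
      linarith
    have hballsub : ball x₀ (r - δ) ⊆ ball x₀ r :=
      ball_subset_ball (by linarith)
    have hdiff : volume (ball x₀ r \ ball x₀ (r - δ)) =
        volume (ball x₀ r) - volume (ball x₀ (r - δ)) :=
      measure_diff hballsub measurableSet_ball.nullMeasurableSet
        measure_ball_lt_top.ne
    calc volume {x | x ∈ ball x₀ r ∧ infDist (ψ x) (⇑ψ '' (ball x₀ r)ᶜ) ≤ ε}
        ≤ volume (ball x₀ r \ ball x₀ (r - δ)) := measure_mono hsub2
      _ = volume (ball x₀ r) - volume (ball x₀ (r - δ)) := hdiff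
      _ ≤ ENNReal.ofReal (2 * π * Real.exp 1 * ε ^ (1 / M) * r) := by
          rw [vol_ball x₀ r hr0.le, vol_ball x₀ (r - δ) (by linarith)]
          rw [tsub_le_iff_right, ← ENNReal.ofReal_add (by positivity) (by positivity)]
          apply ENNReal.ofReal_le_ofReal
          have h : 2 * π * Real.exp 1 * ε ^ (1 / M) * r = 2 * π * δ * r := by
            rw [hδ]; ring
          rw [h]
          nlinarith [pi_pos, sq_nonneg δ]
end
end
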